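/- Let X = ℝⁿ with a metric d_X induced by a norm, and let d be a metric on the double X ⊔ X' extending d_X on both copies with inf d(x,y') > 0. If there exists C > 0 with d(x, X') := inf_{y} d(x, y') < C for all x ∈ X, then there exists D > 0 with d(x', X) := inf_y d(x', y) < D for all x ∈ X. -/

import Mathlib

/-- A function `d : α → α → ℝ` is a metric. -/
def IsMetric {α : Type*} (d : α → α → ℝ) : Prop :=
  (∀ p q, d p q = 0 ↔ p = q) ∧ (∀ p q, d p q = d q p) ∧ ∀ p q r, d p r ≤ d p q + d q r


def IsNorm {n : ℕ} (ν : (Fin n → ℝ) → ℝ) : Prop :=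
  (∀ x, ν x = 0 ↔ x = 0) ∧ (∀ (c : ℝ) (x), ν (c • x) = |c| * ν x) ∧
    ∀ x y, ν (x + y) ≤ ν x + ν y

namespace Stmt11Aux

open Filter

variable {n : ℕ} {ν : (Fin n → ℝ) → ℝ}

lemma nu_zero (hν : IsNorm ν) : ν 0 = 0 := (hν.1 0).2 rfl

lemma nu_neg (hν : IsNorm ν) (x : Fin n → ℝ) : ν (-x) = ν x := by
  have := hν.2.1 (-1) x
  simpa using this

lemma nu_nonneg (hν : IsNorm ν) (x : Fin n → ℝ) : 0 ≤ ν x := by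
  have h := hν.2.2 x (-x)
  rw [add_neg_cancel, nu_zero hν, nu_neg hν] at h
  linarith

lemma nu_sub_symm (hν : IsNorm ν) (x y : Fin n → ℝ) : ν (x - y) = ν (y - x) := by
  rw [← nu_neg hν (x - y), neg_sub]

lemma nu_tri (hν : IsNorm ν) (x y z : Fin n → ℝ) : ν (x - z) ≤ ν (x - y) + ν (y - z) := by
  have := hν.2.2 (x - y) (y - z)
  simpa using this

lemma nu_sum_le (hν : IsNorm ν) {ι : Type*} (s : Finset ι) (g : ι → Fin n → ℝ) :
    ν (∑ i ∈ s, g i) ≤ ∑ i ∈ s, ν (g i) := by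
  classical
  induction s using Finset.induction with
  | empty => simp [nu_zero hν]
  | @insert a s ha ih =>
    rw [Finset.sum_insert ha, Finset.sum_insert ha]
    exact le_trans (hν.2.2 _ _) (by linarith)

lemma nu_upper (hν : IsNorm ν) : ∃ L : ℝ, 0 < L ∧ ∀ x, ν x ≤ L * ‖x‖ := by
  classical
  have hsum : 0 ≤ ∑ i : Fin n, ν (Pi.single i 1) :=
    Finset.sum_nonneg fun i _ => nu_nonneg hν _
  refine ⟨(∑ i : Fin n, ν (Pi.single i 1)) + 1, by linarith, fun x => ?_⟩
  have hx : x = ∑ i : Fin n, Pi.single i (x i) := (Finset.univ_sum_single x).symm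
  have h1 : ν x ≤ ∑ i : Fin n, ν (Pi.single i (x i)) := by
    conv_lhs => rw [hx]
    exact nu_sum_le hν _ _
  have h2 : ∀ i : Fin n, ν (Pi.single i (x i)) ≤ ν (Pi.single i 1) * ‖x‖ := by
    intro i
    have hsingle : Pi.single i (x i) = (x i) • (Pi.single i (1 : ℝ) : Fin n → ℝ) := by
      ext j
      by_cases h : j = i
      · subst h; simp
      · simp [Pi.single_eq_of_ne h]
    rw [hsingle, hν.2.1]
    have : |x i| ≤ ‖x‖ := norm_le_pi_norm x i
    have := nu_nonneg hν (Pi.single i (1 : ℝ))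
    nlinarith
  calc ν x ≤ ∑ i : Fin n, ν (Pi.single i (x i)) := h1
    _ ≤ ∑ i : Fin n, ν (Pi.single i 1) * ‖x‖ := Finset.sum_le_sum fun i _ => h2 i
    _ = (∑ i : Fin n, ν (Pi.single i 1)) * ‖x‖ := by rw [Finset.sum_mul]
    _ ≤ ((∑ i : Fin n, ν (Pi.single i 1)) + 1) * ‖x‖ := by nlinarith [norm_nonneg x]

lemma nu_abs_sub (hν : IsNorm ν) (x y : Fin n → ℝ) : |ν x - ν y| ≤ ν (x - y) := by
  rw [abs_sub_le_iff]
  constructor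
  · have := hν.2.2 (x - y) y; simpa using this
  · have := hν.2.2 (y - x) x
    rw [nu_sub_symm hν y x] at *
    simp at this; linarith [this]

lemma nu_continuous (hν : IsNorm ν) : Continuous ν := by
  obtain ⟨L, hL, hLle⟩ := nu_upper hν
  apply (LipschitzWith.of_dist_le_mul (K := L.toNNReal) (f := ν) ?_).continuous
  intro x y
  rw [Real.dist_eq, Real.coe_toNNReal L hL.le, dist_eq_norm]
  exact le_trans (nu_abs_sub hν x y) (hLle _)

lemma nu_lower (hn : 1 ≤ n) (hν : IsNorm ν) : ∃ c : ℝ, 0 < c ∧ ∀ x, c * ‖x‖ ≤ ν x := by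
  have hsc : IsCompact (Metric.sphere (0 : Fin n → ℝ) 1) := isCompact_sphere _ _
  have hne : (Metric.sphere (0 : Fin n → ℝ) 1).Nonempty := by
    refine ⟨Pi.single ⟨0, hn⟩ 1, ?_⟩
    simp only [Metric.mem_sphere, dist_eq_norm, sub_zero]
    rw [Pi.norm_single]; simp
  obtain ⟨u, hu, humin⟩ := hsc.exists_isMinOn hne (nu_continuous hν).continuousOn
  have hu1 : ‖u‖ = 1 := by simpa [dist_eq_norm] using hu
  have hc : 0 < ν u := by
    rcases (nu_nonneg hν u).lt_or_eq with h | h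
    · exact h
    · exfalso
      have : u = 0 := (hν.1 u).1 h.symm
      rw [this] at hu1; simp at hu1
  refine ⟨ν u, hc, fun x => ?_⟩
  by_cases hx : x = 0
  · simp [hx, nu_zero hν]
  · have hnx : 0 < ‖x‖ := norm_pos_iff.2 hx
    have hmem : ‖x‖⁻¹ • x ∈ Metric.sphere (0 : Fin n → ℝ) 1 := by
      simp [dist_eq_norm, norm_smul, abs_of_pos (inv_pos.2 hnx), inv_mul_cancel₀ hnx.ne']
    have hmin := humin hmem
    have heq : ν x = ‖x‖ * ν (‖x‖⁻¹ • x) := by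
      rw [hν.2.1, abs_of_pos (inv_pos.2 hnx)]
      field_simp
    rw [heq]
    have : ν u ≤ ν (‖x‖⁻¹ • x) := hmin
    nlinarith

lemma isCompact_nuball (hn : 1 ≤ n) (hν : IsNorm ν) (p : Fin n → ℝ) (r : ℝ) :
    IsCompact {z : Fin n → ℝ | ν (z - p) ≤ r} := by
  obtain ⟨c, hc, hcle⟩ := nu_lower hn hν
  apply IsCompact.of_isClosed_subset (isCompact_closedBall p (r / c))
  · exact isClosed_le ((nu_continuous hν).comp (continuous_id.sub continuous_const))
      continuous_const
  · intro z hz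
    have h1 : c * ‖z - p‖ ≤ r := le_trans (hcle _) hz
    rw [Metric.mem_closedBall, dist_eq_norm]
    rw [le_div_iff₀ hc]
    linarith

end Stmt11Aux

namespace Stmt11Aux

open Filter

variable {n : ℕ} {ν : (Fin n → ℝ) → ℝ}

lemma iterate_iso (hν : IsNorm ν) {h : (Fin n → ℝ) → (Fin n → ℝ)}
    (hiso : ∀ x y, ν (h x - h y) = ν (x - y)) (j : ℕ) (x y : Fin n → ℝ) :
    ν (h^[j] x - h^[j] y) = ν (x - y) := by
  induction j with
  | zero => simp
  | succ j ih =>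
    rw [Function.iterate_succ_apply', Function.iterate_succ_apply', hiso, ih]

lemma iterate_zero_fix {h : (Fin n → ℝ) → (Fin n → ℝ)} (h0 : h 0 = 0) (j : ℕ) :
    h^[j] 0 = 0 := by
  induction j with
  | zero => simp
  | succ j ih => rw [Function.iterate_succ_apply', ih, h0]

lemma iso_surj (hn : 1 ≤ n) (hν : IsNorm ν) (h : (Fin n → ℝ) → (Fin n → ℝ))
    (hiso : ∀ x y, ν (h x - h y) = ν (x - y)) (h0 : h 0 = 0) (z : Fin n → ℝ) :
    ∃ x, h x = z := by
  obtain ⟨c, hc, hcle⟩ := nu_lower hn hν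
  obtain ⟨L, hL, hLle⟩ := nu_upper hν
  set K : Set (Fin n → ℝ) := {w | ν (w - 0) ≤ ν z} with hKdef
  have hK : IsCompact K := isCompact_nuball hn hν 0 (ν z)
  have hmem : ∀ j : ℕ, h^[j] z ∈ K := by
    intro j
    have : ν (h^[j] z - h^[j] 0) = ν (z - 0) := iterate_iso hν hiso j z 0
    rw [iterate_zero_fix h0] at this
    simpa [hKdef] using this.le
  -- h is continuous
  have hcont : Continuous h := by
    apply (LipschitzWith.of_dist_le_mul (K := (L / c).toNNReal) (f := h) ?_).continuous
    intro x y
    rw [Real.coe_toNNReal _ (by positivity), dist_eq_norm, dist_eq_norm]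
    have h1 : c * ‖h x - h y‖ ≤ ν (h x - h y) := hcle _
    have h2 : ν (x - y) ≤ L * ‖x - y‖ := hLle _
    rw [hiso] at h1
    rw [div_mul_eq_mul_div, le_div_iff₀ hc]
    nlinarith [norm_nonneg (x - y)]
  have himgclosed : IsClosed (h '' K) := (hK.image hcont).isClosed
  have hcl : z ∈ closure (h '' K) := by
    rw [Metric.mem_closure_iff]
    intro ε hε
    -- find j < k with iterates ν-close
    obtain ⟨a, _, φ, hφ, hφt⟩ := hK.tendsto_subseq hmem
    have hδ : (0:ℝ) < c * ε / (2 * L) := by positivity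
    obtain ⟨N, hN⟩ := (Metric.tendsto_atTop.1 hφt) (c * ε / (2 * L)) hδ
    have hNN := hN N le_rfl
    have hNN1 := hN (N + 1) (by omega)
    have hjk : φ N < φ (N + 1) := hφ (by omega)
    set j := φ N
    set k := φ (N + 1)
    have hsmall : ν (h^[j] z - h^[k] z) < c * ε := by
      have h3 : ν (h^[j] z - h^[k] z) ≤ L * ‖h^[j] z - h^[k] z‖ := hLle _
      have h4 : ‖h^[j] z - h^[k] z‖ ≤ ‖h^[j] z - a‖ + ‖a - h^[k] z‖ := by
        have := dist_triangle (h^[j] z) a (h^[k] z)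
        simpa [dist_eq_norm] using this
      rw [Function.comp_apply] at hNN hNN1
      rw [dist_eq_norm] at hNN hNN1
      have h5 : ‖a - h^[k] z‖ = ‖h^[k] z - a‖ := norm_sub_rev _ _
      have : ‖h^[j] z - h^[k] z‖ < c * ε / L := by
        rw [h5] at h4
        calc ‖h^[j] z - h^[k] z‖ ≤ ‖h^[j] z - a‖ + ‖h^[k] z - a‖ := h4
          _ < c * ε / (2 * L) + c * ε / (2 * L) := by exact add_lt_add hNN hNN1
          _ = c * ε / L := by field_simp; ring
      calc ν (h^[j] z - h^[k] z) ≤ L * ‖h^[j] z - h^[k] z‖ := h3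
        _ < L * (c * ε / L) := by exact (mul_lt_mul_iff_right₀ hL).2 this
        _ = c * ε := by field_simp
    -- transfer back
    have hkj : j + (k - j) = k := by omega
    have htrans : ν (z - h^[k - j] z) < c * ε := by
      have := iterate_iso hν hiso j z (h^[k - j] z)
      rw [← Function.iterate_add_apply h j (k - j) z, hkj] at this
      rw [← this]; exact hsmall
    have hpos : 1 ≤ k - j := by omega
    have hw : h^[k - j] z = h (h^[k - j - 1] z) := by
      have heq : k - j = (k - j - 1) + 1 := by omega
      conv_lhs => rw [heq, Function.iterate_succ_apply' h (k - j - 1) z]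
    refine ⟨h^[k - j] z, ⟨h^[k - j - 1] z, hmem _, hw.symm⟩, ?_⟩
    rw [dist_eq_norm]
    have := hcle (z - h^[k - j] z)
    have hce : c * ‖z - h^[k-j] z‖ < c * ε := lt_of_le_of_lt this htrans
    exact lt_of_mul_lt_mul_left hce hc.le
  rw [himgclosed.closure_eq] at hcl
  obtain ⟨x, _, hx⟩ := hcl
  exact ⟨x, hx⟩

end Stmt11Aux

open Filter Topology Stmt11Aux in
/-- for `X = ℝⁿ` with a norm-induced metric and `d` a metric on the
double `X ⊔ X'` extending it on both copies with mixed distances separated from zero: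
if `d(x, X') < C` for all `x`, then `d(x', X) < D` for all `x`, for some `D > 0`. -/
theorem stmt11 {n : ℕ} (hn : 1 ≤ n) (ν : (Fin n → ℝ) → ℝ) (hν : IsNorm ν)
    (d : (Fin n → ℝ) ⊕ (Fin n → ℝ) → (Fin n → ℝ) ⊕ (Fin n → ℝ) → ℝ)
    (hmet : IsMetric d)
    (h1 : ∀ x y : Fin n → ℝ, d (Sum.inl x) (Sum.inl y) = ν (x - y))
    (h2 : ∀ x y : Fin n → ℝ, d (Sum.inr x) (Sum.inr y) = ν (x - y))
    (hpos : ∃ ε : ℝ, 0 < ε ∧ ∀ x y : Fin n → ℝ, ε ≤ d (Sum.inl x) (Sum.inr y))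
    (C : ℝ) (hC : 0 < C)
    (hCbound : ∀ x : Fin n → ℝ, (⨅ y : Fin n → ℝ, d (Sum.inl x) (Sum.inr y)) < C) :
    ∃ D : ℝ, 0 < D ∧
      ∀ x : Fin n → ℝ, (⨅ y : Fin n → ℝ, d (Sum.inr x) (Sum.inl y)) < D := by
  classical
  obtain ⟨dzero, dsymm, dtri⟩ := hmet
  have dnn : ∀ p q, 0 ≤ d p q := by
    intro p q
    have h := dtri p q p
    have h0 : d p p = 0 := (dzero p p).2 rfl
    have hs : d q p = d p q := dsymm q p
    linarith
  have hf0 : ∀ x, ∃ y, d (Sum.inl x) (Sum.inr y) < C := fun x => exists_lt_of_ciInf_lt (hCbound x)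
  choose f hfC using hf0
  have key1 : ∀ a b, ν (f a - f b) ≤ ν (a - b) + 2*C := by
    intro a b
    have e1 := h2 (f a) (f b)
    have e2 := h1 a b
    have t1 := dtri (Sum.inr (f a)) (Sum.inl a) (Sum.inr (f b))
    have t2 := dtri (Sum.inl a) (Sum.inl b) (Sum.inr (f b))
    have s1 := dsymm (Sum.inr (f a)) (Sum.inl a)
    have c1 := hfC a
    have c2 := hfC b
    linarith
  have key2 : ∀ a b, ν (a - b) ≤ ν (f a - f b) + 2*C := by
    intro a b
    have e1 := h2 (f a) (f b)
    have e2 := h1 a b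
    have t1 := dtri (Sum.inl a) (Sum.inr (f a)) (Sum.inl b)
    have t2 := dtri (Sum.inr (f a)) (Sum.inr (f b)) (Sum.inl b)
    have s1 := dsymm (Sum.inr (f b)) (Sum.inl b)
    have c1 := hfC a
    have c2 := hfC b
    linarith
  by_contra hcon
  push_neg at hcon
  have hp0 : ∀ k : ℕ, ∃ p, ((k:ℝ) + 1 + C) ≤ ⨅ y, d (Sum.inr p) (Sum.inl y) := by
    intro k
    refine hcon _ ?_
    have h0 : (0:ℝ) ≤ (k:ℝ) := Nat.cast_nonneg k
    linarith
  choose p hp using hp0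
  have hpS : ∀ (k : ℕ) y, ((k:ℝ) + 1) ≤ ν (p k - f y) := by
    intro k y
    have hg : (⨅ y, d (Sum.inr (p k)) (Sum.inl y)) ≤ d (Sum.inr (p k)) (Sum.inl y) :=
      ciInf_le ⟨0, by rintro _ ⟨y, rfl⟩; exact dnn _ _⟩ y
    have t1 := dtri (Sum.inr (p k)) (Sum.inr (f y)) (Sum.inl y)
    have e1 := h2 (p k) (f y)
    have s1 := dsymm (Sum.inr (f y)) (Sum.inl y)
    have c1 := hfC y
    have hpk := hp k
    linarith
  set S : ℕ → ℝ := fun k => ⨅ y, ν (p k - f y) with hSdef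
  have hSbdd : ∀ k : ℕ, BddBelow (Set.range fun y => ν (p k - f y)) :=
    fun k => ⟨0, by rintro _ ⟨y, rfl⟩; exact nu_nonneg hν _⟩
  have hSk : ∀ k : ℕ, ((k:ℝ)+1) ≤ S k := fun k => le_ciInf (hpS k)
  have hS1 : ∀ k : ℕ, (1:ℝ) ≤ S k := by
    intro k
    have h0 : (0:ℝ) ≤ (k:ℝ) := Nat.cast_nonneg k
    linarith [hSk k]
  have hSpos : ∀ k : ℕ, 0 < S k := fun k => lt_of_lt_of_le zero_lt_one (hS1 k)
  have hSle : ∀ (k : ℕ) y, S k ≤ ν (p k - f y) := fun k y => ciInf_le (hSbdd k) y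
  have hx0 : ∀ k : ℕ, ∃ x, ν (p k - f x) < S k + 1 :=
    fun k => exists_lt_of_ciInf_lt (by linarith [hSpos k])
  choose xc hxc using hx0
  set F : ℕ → (Fin n → ℝ) → (Fin n → ℝ) :=
    fun k x => (S k)⁻¹ • (f (xc k + S k • x) - f (xc k)) with hFdef
  set q : ℕ → (Fin n → ℝ) := fun k => (S k)⁻¹ • (p k - f (xc k)) with hqdef
  have hsm : ∀ (k : ℕ) (v : Fin n → ℝ), ν ((S k)⁻¹ • v) = (S k)⁻¹ * ν v := by
    intro k v
    rw [hν.2.1, abs_of_pos (inv_pos.2 (hSpos k))]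
  have hinvle1 : ∀ k : ℕ, (S k)⁻¹ ≤ 1 := fun k => inv_le_one_of_one_le₀ (hS1 k)
  have hFsub : ∀ (k : ℕ) x y, F k x - F k y
      = (S k)⁻¹ • (f (xc k + S k • x) - f (xc k + S k • y)) := by
    intro k x y
    simp only [hFdef]
    rw [← smul_sub]
    congr 1
    abel
  have hFest : ∀ (k : ℕ) x y, |ν (F k x - F k y) - ν (x - y)| ≤ 2*C * (S k)⁻¹ := by
    intro k x y
    have hs := hSpos k
    rw [hFsub k x y, hsm k _]
    have harg : (xc k + S k • x) - (xc k + S k • y) = S k • (x - y) := by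
      rw [smul_sub]; abel
    have hk1 := key1 (xc k + S k • x) (xc k + S k • y)
    have hk2 := key2 (xc k + S k • x) (xc k + S k • y)
    rw [harg] at hk1 hk2
    have hsν : ν (S k • (x - y)) = S k * ν (x - y) := by rw [hν.2.1, abs_of_pos hs]
    rw [hsν] at hk1 hk2
    have e : (S k)⁻¹ * ν (f (xc k + S k • x) - f (xc k + S k • y)) - ν (x - y)
        = (S k)⁻¹ * (ν (f (xc k + S k • x) - f (xc k + S k • y)) - S k * ν (x - y)) := by
      field_simp
    rw [e, abs_mul, abs_of_pos (inv_pos.2 hs)]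
    have hW : |ν (f (xc k + S k • x) - f (xc k + S k • y)) - S k * ν (x - y)| ≤ 2*C :=
      abs_le.2 ⟨by linarith, by linarith⟩
    calc (S k)⁻¹ * |ν (f (xc k + S k • x) - f (xc k + S k • y)) - S k * ν (x - y)|
        ≤ (S k)⁻¹ * (2*C) := mul_le_mul_of_nonneg_left hW (inv_nonneg.2 hs.le)
      _ = 2*C * (S k)⁻¹ := by ring
  have hF0 : ∀ k : ℕ, F k 0 = 0 := by
    intro k
    simp [hFdef]
  have hFb : ∀ (k : ℕ) x, ν (F k x) ≤ ν x + 2*C := by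
    intro k x
    have h := (abs_le.1 (hFest k x 0)).2
    rw [hF0 k, sub_zero, sub_zero] at h
    have h2C : 2*C * (S k)⁻¹ ≤ 2*C := by nlinarith [hinvle1 k, inv_pos.2 (hSpos k)]
    linarith
  have hqb : ∀ k : ℕ, ν (q k) ≤ 2 := by
    intro k
    have h1 : ν (q k) = (S k)⁻¹ * ν (p k - f (xc k)) := hsm k _
    have h2 : ν (p k - f (xc k)) ≤ S k + 1 := (hxc k).le
    have h3 : (S k)⁻¹ * ν (p k - f (xc k)) ≤ (S k)⁻¹ * (S k + 1) :=
      mul_le_mul_of_nonneg_left h2 (inv_nonneg.2 (hSpos k).le)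
    have h4 : (S k)⁻¹ * S k = 1 := inv_mul_cancel₀ (hSpos k).ne'
    nlinarith [hinvle1 k]
  have hd1 : ∀ (k : ℕ) x, 1 ≤ ν (F k x - q k) := by
    intro k x
    have e : F k x - q k = (S k)⁻¹ • (f (xc k + S k • x) - p k) := by
      simp only [hFdef, hqdef]
      rw [← smul_sub]
      congr 1
      abel
    rw [e, hsm k _, nu_sub_symm hν]
    have h1 : S k ≤ ν (p k - f (xc k + S k • x)) := hSle k _
    have h2 : (S k)⁻¹ * S k ≤ (S k)⁻¹ * ν (p k - f (xc k + S k • x)) :=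
      mul_le_mul_of_nonneg_left h1 (inv_nonneg.2 (hSpos k).le)
    have h4 : (S k)⁻¹ * S k = 1 := inv_mul_cancel₀ (hSpos k).ne'
    linarith
  -- ultrafilter limits
  set U : Ultrafilter ℕ := Ultrafilter.of atTop with hUdef
  have hUle : (U : Filter ℕ) ≤ atTop := Ultrafilter.of_le _
  have hlim : ∀ (g : ℕ → (Fin n → ℝ)) (R : ℝ), (∀ k, ν (g k) ≤ R) →
      ∃ a, Tendsto g (U : Filter ℕ) (𝓝 a) := by
    intro g R hg
    have hK := isCompact_nuball hn hν 0 R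
    have hmem : (↑(U.map g) : Filter _) ≤ 𝓟 {z : Fin n → ℝ | ν (z - 0) ≤ R} := by
      rw [Ultrafilter.coe_map]
      refine le_principal_iff.2 (Filter.mem_map.2 ?_)
      refine Filter.univ_mem' fun k => ?_
      simpa using hg k
    obtain ⟨a, _, ha⟩ := hK.ultrafilter_le_nhds (U.map g) hmem
    rw [Ultrafilter.coe_map] at ha
    exact ⟨a, ha⟩
  have hGex : ∀ x, ∃ a, Tendsto (fun k => F k x) (U : Filter ℕ) (𝓝 a) :=
    fun x => hlim _ (ν x + 2*C) (fun k => hFb k x)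
  choose G hG using hGex
  obtain ⟨qq, hqq⟩ := hlim q 2 hqb
  have hG0 : G 0 = 0 := by
    have h0' : Tendsto (fun k => F k 0) (U : Filter ℕ) (𝓝 0) := by
      simp only [hF0]
      exact tendsto_const_nhds
    exact tendsto_nhds_unique (hG 0) h0'
  have hrate : Tendsto (fun k : ℕ => 2*C * (S k)⁻¹) (U : Filter ℕ) (𝓝 0) := by
    refine Tendsto.mono_left ?_ hUle
    have hb : Tendsto (fun k : ℕ => 2*C * (1/((k:ℝ)+1))) atTop (𝓝 0) := by
      have h : Tendsto (fun k : ℕ => 1 / ((k:ℝ) + 1)) atTop (𝓝 0) := tendsto_one_div_add_atTop_nhds_zero_nat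
      simpa using h.const_mul (2*C)
    refine squeeze_zero (fun k => mul_nonneg (by linarith) (inv_nonneg.2 (hSpos k).le))
      (fun k => ?_) hb
    have h1 : ((k:ℝ)+1) ≤ S k := hSk k
    have h2 : (0:ℝ) < (k:ℝ)+1 := by positivity
    have h3 := one_div_le_one_div_of_le h2 h1
    rw [one_div, one_div] at h3
    have h4 := mul_le_mul_of_nonneg_left h3 (le_of_lt (by linarith : (0:ℝ) < 2*C))
    rw [one_div]
    linarith
  have hGiso : ∀ x y, ν (G x - G y) = ν (x - y) := by
    intro x y
    have t1 : Tendsto (fun k => ν (F k x - F k y)) (U : Filter ℕ) (𝓝 (ν (G x - G y))) :=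
      ((nu_continuous hν).tendsto _).comp ((hG x).sub (hG y))
    have t2 : Tendsto (fun k => ν (F k x - F k y)) (U : Filter ℕ) (𝓝 (ν (x - y))) := by
      have hup : ∀ k, ν (F k x - F k y) ≤ ν (x-y) + 2*C*(S k)⁻¹ := by
        intro k
        have h := (abs_le.1 (hFest k x y)).2
        linarith
      have hlo : ∀ k, ν (x-y) - 2*C*(S k)⁻¹ ≤ ν (F k x - F k y) := by
        intro k
        have h := (abs_le.1 (hFest k x y)).1
        linarith
      have tup : Tendsto (fun k : ℕ => ν (x-y) + 2*C*(S k)⁻¹) (U : Filter ℕ) (𝓝 (ν (x-y))) := by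
        simpa using (tendsto_const_nhds : Tendsto (fun _ : ℕ => ν (x-y)) (U : Filter ℕ) (𝓝 (ν (x-y)))).add hrate
      have tlo : Tendsto (fun k : ℕ => ν (x-y) - 2*C*(S k)⁻¹) (U : Filter ℕ) (𝓝 (ν (x-y))) := by
        simpa using (tendsto_const_nhds : Tendsto (fun _ : ℕ => ν (x-y)) (U : Filter ℕ) (𝓝 (ν (x-y)))).sub hrate
      exact tendsto_of_tendsto_of_tendsto_of_le_of_le tlo tup hlo hup
    exact tendsto_nhds_unique t1 t2
  have hgap : ∀ x, 1 ≤ ν (G x - qq) := by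
    intro x
    have t : Tendsto (fun k => ν (F k x - q k)) (U : Filter ℕ) (𝓝 (ν (G x - qq))) :=
      ((nu_continuous hν).tendsto _).comp ((hG x).sub hqq)
    exact ge_of_tendsto t (Filter.Eventually.of_forall fun k => hd1 k x)
  obtain ⟨x, hxq⟩ := iso_surj hn hν G hGiso hG0 qq
  have hcontra := hgap x
  rw [hxq, sub_self, nu_zero hν] at hcontra
  linarith
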